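/- Positivity of the EM ridge estimate: let S be symmetric PSD, A ∈ ℝ^{m×q}, δ > 0, and Σ = δ I_q + Aᵀ A. Suppose range(A) ⊆ range(S). Then B := S − S A (δ Σ + Aᵀ S A)⁻¹ Aᵀ S is the Moore–Penrose pseudoinverse of S⁺ + δ⁻¹ A Σ⁻¹ Aᵀ; in particular B is positive semidefinite, so tr(B) ≥ 0 and the updated ridge parameter δ' = tr(B)/m is nonnegative. -/

import Mathlib

open Matrix

/-- `Y` is the Moore–Penrose pseudoinverse of `X`. -/
def IsMoorePenrose {n : ℕ} (X Y : Matrix (Fin n) (Fin n) ℝ) : Prop :=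
  X * Y * X = X ∧ Y * X * Y = Y ∧ (X * Y)ᵀ = X * Y ∧ (Y * X)ᵀ = Y * X

private lemma mp_unique {n : ℕ} {X Y Z : Matrix (Fin n) (Fin n) ℝ}
    (hY : IsMoorePenrose X Y) (hZ : IsMoorePenrose X Z) : Y = Z := by
  obtain ⟨y1, y2, y3, y4⟩ := hY
  obtain ⟨z1, z2, z3, z4⟩ := hZ
  have hXY : X * Y = X * Z := by
    calc X * Y = (X * Y)ᵀ := y3.symm
      _ = Yᵀ * Xᵀ := transpose_mul _ _
      _ = Yᵀ * (X * Z * X)ᵀ := by rw [z1]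
      _ = Yᵀ * (Xᵀ * (X * Z)ᵀ) := by rw [transpose_mul]
      _ = (Yᵀ * Xᵀ) * (X * Z)ᵀ := by rw [Matrix.mul_assoc]
      _ = (X * Y)ᵀ * (X * Z) := by rw [← transpose_mul, z3]
      _ = (X * Y) * (X * Z) := by rw [y3]
      _ = (X * Y * X) * Z := by simp only [Matrix.mul_assoc]
      _ = X * Z := by rw [y1]
  have hYX : Y * X = Z * X := by
    calc Y * X = (Y * X)ᵀ := y4.symm
      _ = Xᵀ * Yᵀ := transpose_mul _ _
      _ = (X * Z * X)ᵀ * Yᵀ := by rw [z1]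
      _ = ((Z * X)ᵀ * Xᵀ) * Yᵀ := by
            rw [Matrix.mul_assoc, transpose_mul]
      _ = (Z * X)ᵀ * (Y * X)ᵀ := by rw [Matrix.mul_assoc, ← transpose_mul]
      _ = (Z * X) * (Y * X) := by rw [z4, y4]
      _ = Z * (X * Y * X) := by simp only [Matrix.mul_assoc]
      _ = Z * X := by rw [y1]
  calc Y = Y * X * Y := y2.symm
    _ = Y * (X * Y) := Matrix.mul_assoc _ _ _
    _ = Y * (X * Z) := by rw [hXY]
    _ = (Y * X) * Z := (Matrix.mul_assoc _ _ _).symm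
    _ = (Z * X) * Z := by rw [hYX]
    _ = Z := z2

private lemma posSemidef_smul' {n : ℕ} {c : ℝ} (hc : 0 ≤ c)
    {M : Matrix (Fin n) (Fin n) ℝ} (hM : M.PosSemidef) : (c • M).PosSemidef := by
  refine PosSemidef.of_dotProduct_mulVec_nonneg ?_ (fun x => ?_)
  · show (c • M)ᴴ = c • M
    rw [conjTranspose_smul, hM.1]
    simp
  · rw [smul_mulVec, dotProduct_smul, smul_eq_mul]
    exact mul_nonneg hc (hM.dotProduct_mulVec_nonneg x)

theorem stmt17 {m q : ℕ} (hm : 0 < m)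
    (S Splus : Matrix (Fin m) (Fin m) ℝ) (hS : S.PosSemidef)
    (hSplus : IsMoorePenrose S Splus)
    (A : Matrix (Fin m) (Fin q) ℝ)
    (hrange : LinearMap.range A.mulVecLin ≤ LinearMap.range S.mulVecLin)
    (δ : ℝ) (hδ : 0 < δ)
    (Sigm : Matrix (Fin q) (Fin q) ℝ)
    (hSig : Sigm = δ • (1 : Matrix (Fin q) (Fin q) ℝ) + Aᵀ * A)
    (B : Matrix (Fin m) (Fin m) ℝ)
    (hB : B = S - S * A * (δ • Sigm + Aᵀ * S * A)⁻¹ * Aᵀ * S) :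
    IsMoorePenrose (Splus + δ⁻¹ • (A * Sigm⁻¹ * Aᵀ)) B ∧
    B.PosSemidef ∧ 0 ≤ B.trace ∧ 0 ≤ B.trace / m := by
  classical
  obtain ⟨h1, h2, h3, h4⟩ := hSplus
  have hSsym : Sᵀ = S := by
    rw [← conjTranspose_eq_transpose_of_trivial]; exact hS.1
  -- symmetry of Splus via uniqueness of Moore-Penrose inverse
  have hPsym : Splusᵀ = Splus := by
    refine mp_unique ?_ ⟨h1, h2, h3, h4⟩
    refine ⟨?_, ?_, ?_, ?_⟩
    · have := congrArg Matrix.transpose h1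
      rw [transpose_mul, transpose_mul, hSsym] at this
      rwa [Matrix.mul_assoc]
    · have := congrArg Matrix.transpose h2
      rw [transpose_mul, transpose_mul, hSsym] at this
      rwa [Matrix.mul_assoc]
    · rw [transpose_mul, transpose_transpose, hSsym]
      calc Splus * S = (Splus * S)ᵀ := h4.symm
        _ = Sᵀ * Splusᵀ := transpose_mul _ _
        _ = S * Splusᵀ := by rw [hSsym]
    · rw [transpose_mul, transpose_transpose, hSsym]
      calc S * Splus = (S * Splus)ᵀ := h3.symm
        _ = Splusᵀ * Sᵀ := transpose_mul _ _
        _ = Splusᵀ * S := by rw [hSsym]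
  -- Splus*S = S*Splus
  have hcomm : Splus * S = S * Splus := by
    calc Splus * S = (Splus * S)ᵀ := h4.symm
      _ = Sᵀ * Splusᵀ := transpose_mul _ _
      _ = S * Splus := by rw [hSsym, hPsym]
  -- range condition: S * Splus * A = A
  have hSSA : S * Splus * A = A := by
    have hcol : ∀ j, ∃ v, S.mulVec v = A.mulVec (Pi.single j 1) := by
      intro j
      obtain ⟨v, hv⟩ := hrange ⟨Pi.single j 1, rfl⟩
      exact ⟨v, by simpa [Matrix.mulVecLin_apply] using hv⟩
    choose v hv using hcol
    have hSC : S * (Matrix.of fun i j => v j i) = A := by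
      ext i j
      have := congrFun (hv j) i
      rw [Matrix.mulVec_single] at this
      simpa [Matrix.mul_apply, Matrix.mulVec, dotProduct] using this
    calc S * Splus * A = S * Splus * (S * (Matrix.of fun i j => v j i)) := by rw [hSC]
      _ = (S * Splus * S) * (Matrix.of fun i j => v j i) := by
            simp only [Matrix.mul_assoc]
      _ = A := by rw [h1, hSC]
  have hPSA : Splus * S * A = A := by rw [hcomm, hSSA]
  -- positive definiteness of Sigm and M
  have hAtA : (Aᵀ * A).PosSemidef := by
    have := Matrix.posSemidef_conjTranspose_mul_self A
    rwa [conjTranspose_eq_transpose_of_trivial] at this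
  have hSigPD : Sigm.PosDef := by
    rw [hSig]
    refine Matrix.PosDef.add_posSemidef ?_ hAtA
    have hd : (δ • (1 : Matrix (Fin q) (Fin q) ℝ)) = Matrix.diagonal (fun _ => δ) := by
      ext i j
      by_cases h : i = j <;> simp [h, Matrix.one_apply, Matrix.diagonal_apply]
    rw [hd]
    exact Matrix.posDef_diagonal_iff.mpr (fun _ => hδ)
  have hASA : (Aᵀ * S * A).PosSemidef := by
    have := hS.conjTranspose_mul_mul_same A
    rwa [conjTranspose_eq_transpose_of_trivial] at this
  set M : Matrix (Fin q) (Fin q) ℝ := δ • Sigm + Aᵀ * S * A with hMdef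
  have hMPD : M.PosDef := by
    refine Matrix.PosDef.add_posSemidef ?_ hASA
    refine PosDef.of_dotProduct_mulVec_pos ?_ (fun x hx => ?_)
    · show (δ • Sigm)ᴴ = δ • Sigm
      rw [conjTranspose_smul, hSigPD.1]; simp
    · rw [smul_mulVec, dotProduct_smul, smul_eq_mul]
      exact mul_pos hδ (hSigPD.dotProduct_mulVec_pos hx)
  set N : Matrix (Fin q) (Fin q) ℝ := M⁻¹ with hNdef
  set T : Matrix (Fin q) (Fin q) ℝ := Sigm⁻¹ with hTdef
  have hMN : M * N = 1 :=
    Matrix.mul_nonsing_inv _ ((Matrix.isUnit_iff_isUnit_det _).mp hMPD.isUnit)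
  have hTS : T * Sigm = 1 :=
    Matrix.nonsing_inv_mul _ ((Matrix.isUnit_iff_isUnit_det _).mp hSigPD.isUnit)
  have hNsym : Nᵀ = N := by
    rw [hNdef, Matrix.transpose_nonsing_inv]
    congr 1
    rw [← conjTranspose_eq_transpose_of_trivial]; exact hMPD.1
  have hTsym : Tᵀ = T := by
    rw [hTdef, Matrix.transpose_nonsing_inv]
    congr 1
    rw [← conjTranspose_eq_transpose_of_trivial]; exact hSigPD.1
  -- B in terms of N
  have hBN : B = S - S * A * N * Aᵀ * S := hB
  set X : Matrix (Fin m) (Fin m) ℝ := Splus + δ⁻¹ • (A * T * Aᵀ) with hXdef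
  -- key algebraic identity
  have hASAMN : Aᵀ * S * A = M - δ • Sigm := by
    rw [hMdef]; abel
  have hkey : A * T * (Aᵀ * S * A) * N = A * T - δ • (A * N) := by
    rw [hASAMN, Matrix.mul_sub, Matrix.sub_mul]
    congr 1
    · rw [Matrix.mul_assoc, Matrix.mul_assoc, hMN, Matrix.mul_one]
    · rw [Matrix.mul_smul, Matrix.smul_mul]
      congr 1
      rw [Matrix.mul_assoc A T Sigm, hTS, Matrix.mul_one]
  -- X * B = Splus * S
  have hXB : X * B = Splus * S := by
    rw [hXdef, hBN]
    rw [Matrix.add_mul, Matrix.mul_sub, Matrix.mul_sub, Matrix.smul_mul, Matrix.smul_mul]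
    have e1 : Splus * (S * A * N * Aᵀ * S) = A * N * Aᵀ * S := by
      calc Splus * (S * A * N * Aᵀ * S) = (Splus * S * A) * (N * (Aᵀ * S)) := by
            simp only [Matrix.mul_assoc]
        _ = A * (N * (Aᵀ * S)) := by rw [hPSA]
        _ = A * N * Aᵀ * S := by simp only [Matrix.mul_assoc]
    have e2 : A * T * Aᵀ * (S * A * N * Aᵀ * S)
        = A * T * Aᵀ * S - δ • (A * N * Aᵀ * S) := by
      calc A * T * Aᵀ * (S * A * N * Aᵀ * S)
          = (A * T * (Aᵀ * S * A) * N) * (Aᵀ * S) := by simp only [Matrix.mul_assoc]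
        _ = (A * T - δ • (A * N)) * (Aᵀ * S) := by rw [hkey]
        _ = A * T * (Aᵀ * S) - δ • (A * N * (Aᵀ * S)) := by
              rw [Matrix.sub_mul, Matrix.smul_mul]
        _ = A * T * Aᵀ * S - δ • (A * N * Aᵀ * S) := by
              simp only [Matrix.mul_assoc]
    rw [e1, e2, smul_sub, smul_smul, inv_mul_cancel₀ hδ.ne', one_smul]
    abel
  -- X and B are symmetric
  have hBsym : Bᵀ = B := by
    rw [hBN, transpose_sub, hSsym]
    congr 1
    simp only [transpose_mul, transpose_transpose, hSsym, hNsym, Matrix.mul_assoc]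
  have hXsym : Xᵀ = X := by
    rw [hXdef, transpose_add, hPsym, transpose_smul]
    congr 2
    simp only [transpose_mul, transpose_transpose, hTsym, Matrix.mul_assoc]
  -- B * X = Splus * S
  have hPS : (Splus * S)ᵀ = Splus * S := h4
  have hBX : B * X = Splus * S := by
    calc B * X = Bᵀ * Xᵀ := by rw [hBsym, hXsym]
      _ = (X * B)ᵀ := (transpose_mul _ _).symm
      _ = (Splus * S)ᵀ := by rw [hXB]
      _ = Splus * S := hPS
  -- MP conditions
  have mp1 : X * B * X = X := by
    rw [hXB, hXdef, Matrix.mul_add]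
    rw [h2, Matrix.mul_smul]
    congr 2
    rw [← Matrix.mul_assoc, ← Matrix.mul_assoc, hPSA]
  have mp2 : B * X * B = B := by
    rw [Matrix.mul_assoc, hXB, hBN, Matrix.sub_mul]
    have f1 : S * (Splus * S) = S := by rw [← Matrix.mul_assoc]; exact h1
    have f2 : S * A * N * Aᵀ * S * (Splus * S) = S * A * N * Aᵀ * S := by
      calc S * A * N * Aᵀ * S * (Splus * S)
          = S * A * N * Aᵀ * (S * Splus * S) := by simp only [Matrix.mul_assoc]
        _ = S * A * N * Aᵀ * S := by rw [h1]
    rw [f1, f2]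
  have mp3 : (X * B)ᵀ = X * B := by rw [hXB, hPS]
  have mp4 : (B * X)ᵀ = B * X := by rw [hBX, hPS]
  -- positivity
  have hSplusPSD : Splus.PosSemidef := by
    have hrw : Splus = Splusᴴ * S * Splus := by
      rw [conjTranspose_eq_transpose_of_trivial, hPsym]
      exact h2.symm
    rw [hrw]
    exact hS.conjTranspose_mul_mul_same Splus
  have hXPSD : X.PosSemidef := by
    rw [hXdef]
    refine hSplusPSD.add (posSemidef_smul' (le_of_lt (inv_pos.mpr hδ)) ?_)
    have hT : T.PosSemidef := hSigPD.inv.posSemidef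
    have := hT.mul_mul_conjTranspose_same A
    rwa [conjTranspose_eq_transpose_of_trivial] at this
  have hBPSD : B.PosSemidef := by
    have hrw : B = Bᴴ * X * B := by
      rw [conjTranspose_eq_transpose_of_trivial, hBsym]
      exact mp2.symm
    rw [hrw]
    exact hXPSD.conjTranspose_mul_mul_same B
  have htr : 0 ≤ B.trace := by
    rw [Matrix.trace]
    refine Finset.sum_nonneg fun i _ => ?_
    have := hBPSD.dotProduct_mulVec_nonneg (Pi.single i 1)
    simpa [Matrix.mulVec_single, dotProduct, Pi.single_apply] using this
  exact ⟨⟨mp1, mp2, mp3, mp4⟩, hBPSD, htr, div_nonneg htr (Nat.cast_nonneg m)⟩
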